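/- Ratio factorization for the two-point birth-death chain: for all 1 ≤ i ≤ N−1, π(i+1)/π(i) = 1 + (p₀(1)−p₀(2))(i−i₁)(i−i₂)/((i+1)((a+p₀(1))(N−1)−ip₀(1))), where i₁ and i₂ are the two roots (with i₁ ≤ i₂) of the quadratic (p₀(1)−p₀(2))x² − (N(a+b+p₀(1)−p₀(2)) − (a+b+2p₀(1)))x + (N−1)(bN−a−p₀(1)) = 0 given explicitly by i_{1,2} = (N(a+b+p₀(1)−p₀(2)) − (a+b+2p₀(1)) ∓ √Δ)/(2(p₀(1)−p₀(2))) with Δ = [N(a+b+p₀(1)−p₀(2)) − (a+b+2p₀(1))]² − 4(N−1)(bN−a−p₀(1))(p₀(1)−p₀(2)). -/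

import Mathlib

/-- Birth rate `b_n = (N-n)(b + p₂ n/(N-1))`. -/
noncomputable def bdBirth (N : ℕ) (b p2 : ℝ) (n : ℕ) : ℝ :=
  ((N : ℝ) - n) * (b + p2 * n / ((N : ℝ) - 1))

/-- Death rate `d_n = n(a + p₁ (N-n)/(N-1))`. -/
noncomputable def bdDeath (N : ℕ) (a p1 : ℝ) (n : ℕ) : ℝ :=
  (n : ℝ) * (a + p1 * ((N : ℝ) - n) / ((N : ℝ) - 1))

/-- Invariant distribution `π(n) ∝ ∏_{k=1}^n b_{k-1}/d_k`. -/
noncomputable def bdPi' (N : ℕ) (a b p1 p2 : ℝ) (n : ℕ) : ℝ :=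
  ∏ k ∈ Finset.Icc 1 n, bdBirth N b p2 (k - 1) / bdDeath N a p1 k

set_option maxHeartbeats 1000000 in
/-- Ratio factorization for the two-point birth-death chain: for `1 ≤ i ≤ N-1`,
`π(i+1)/π(i) = 1 + (p₁-p₂)(i-i₁)(i-i₂)/((i+1)((a+p₁)(N-1)-ip₁))`, where `i₁ ≤ i₂`
are the roots of the explicit quadratic. -/
theorem stmt_18 (N : ℕ) (hN : 2 ≤ N) (a b p1 p2 : ℝ) (ha : 0 < a) (hb : 0 < b)
    (hp : p2 < p1) (hp2 : 0 ≤ p2)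
    (hΔ : 0 ≤ ((N : ℝ) * (a + b + p1 - p2) - (a + b + 2 * p1)) ^ 2 -
      4 * ((N : ℝ) - 1) * (b * N - a - p1) * (p1 - p2)) :
    ∀ i : ℕ, 1 ≤ i → i ≤ N - 1 →
      let B : ℝ := (N : ℝ) * (a + b + p1 - p2) - (a + b + 2 * p1)
      let Δ : ℝ := B ^ 2 - 4 * ((N : ℝ) - 1) * (b * N - a - p1) * (p1 - p2)
      let i1 : ℝ := (B - Real.sqrt Δ) / (2 * (p1 - p2))
      let i2 : ℝ := (B + Real.sqrt Δ) / (2 * (p1 - p2))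
      bdPi' N a b p1 p2 (i + 1) / bdPi' N a b p1 p2 i =
        1 + (p1 - p2) * ((i : ℝ) - i1) * ((i : ℝ) - i2) /
          (((i : ℝ) + 1) * ((a + p1) * ((N : ℝ) - 1) - i * p1)) := by
  intro i hi1 hiN
  dsimp only
  have hp1 : 0 < p1 := lt_of_le_of_lt hp2 hp
  have hNR : (2:ℝ) ≤ (N:ℝ) := by exact_mod_cast hN
  have hN1 : (0:ℝ) < (N:ℝ) - 1 := by linarith
  have hiR : (i:ℝ) ≤ (N:ℝ) - 1 := by
    have : (i:ℝ) ≤ ((N-1:ℕ):ℝ) := Nat.cast_le.mpr hiN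
    rwa [Nat.cast_sub (by omega), Nat.cast_one] at this
  -- positivity of bdPi' i
  have hpi : 0 < bdPi' N a b p1 p2 i := by
    apply Finset.prod_pos
    intro k hk
    simp only [Finset.mem_Icc] at hk
    have hk1 : 1 ≤ k := hk.1
    have hkR : (k:ℝ) ≤ (N:ℝ) - 1 := le_trans (Nat.cast_le.mpr hk.2) hiR
    have hkm : ((k-1:ℕ):ℝ) = (k:ℝ) - 1 := by
      rw [Nat.cast_sub hk1, Nat.cast_one]
    have hk0 : (1:ℝ) ≤ (k:ℝ) := by exact_mod_cast hk1
    apply div_pos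
    · unfold bdBirth
      rw [hkm]
      apply mul_pos (by linarith)
      have : 0 ≤ p2 * ((k:ℝ)-1) / ((N:ℝ)-1) := div_nonneg (mul_nonneg hp2 (by linarith)) hN1.le
      linarith
    · unfold bdDeath
      apply mul_pos (by linarith)
      have : 0 ≤ p1 * ((N:ℝ)-(k:ℝ)) / ((N:ℝ)-1) := by
        apply div_nonneg (mul_nonneg hp1.le (by linarith)) hN1.le
      linarith
  have hstep : bdPi' N a b p1 p2 (i+1)
      = bdPi' N a b p1 p2 i * (bdBirth N b p2 i / bdDeath N a p1 (i+1)) := by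
    unfold bdPi'
    rw [Finset.prod_Icc_succ_top (by omega)]
    simp
  rw [hstep, mul_comm, mul_div_assoc, div_self hpi.ne', mul_one]
  -- now pure algebra
  set s := Real.sqrt (((N : ℝ) * (a + b + p1 - p2) - (a + b + 2 * p1)) ^ 2 -
      4 * ((N : ℝ) - 1) * (b * N - a - p1) * (p1 - p2)) with hsdef
  have hs : s ^ 2 = ((N : ℝ) * (a + b + p1 - p2) - (a + b + 2 * p1)) ^ 2 -
      4 * ((N : ℝ) - 1) * (b * N - a - p1) * (p1 - p2) := Real.sq_sqrt hΔ
  have key : (p1 - p2) * ((i:ℝ) - ((((N : ℝ) * (a + b + p1 - p2) - (a + b + 2 * p1)) - s) / (2 * (p1 - p2))))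
      * ((i:ℝ) - ((((N : ℝ) * (a + b + p1 - p2) - (a + b + 2 * p1)) + s) / (2 * (p1 - p2))))
      = (p1 - p2) * (i:ℝ)^2 - ((N : ℝ) * (a + b + p1 - p2) - (a + b + 2 * p1)) * (i:ℝ)
        + ((N:ℝ) - 1) * (b * (N:ℝ) - a - p1) := by
    have hpp : p1 - p2 ≠ 0 := by linarith
    field_simp
    linear_combination (-1) * hs
  rw [key]
  have h1 : (0:ℝ) < (i:ℝ) + 1 := by positivity
  have h2 : (0:ℝ) < (a + p1) * ((N:ℝ) - 1) - (i:ℝ) * p1 := by nlinarith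
  have hcast : ((i+1:ℕ):ℝ) = (i:ℝ) + 1 := by push_cast; ring
  have hD : (((i:ℝ) + 1) * ((a + p1) * ((N:ℝ) - 1) - (i:ℝ) * p1)) ≠ 0 := (mul_pos h1 h2).ne'
  have hden : bdDeath N a p1 (i+1)
      = ((i:ℝ) + 1) * ((a + p1) * ((N:ℝ) - 1) - (i:ℝ) * p1) / ((N:ℝ) - 1) := by
    unfold bdDeath
    rw [hcast, eq_div_iff hN1.ne']
    field_simp
    ring
  rw [hden, div_div_eq_mul_div, div_eq_iff hD, add_mul, one_mul, div_mul_cancel₀ _ hD]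
  unfold bdBirth
  field_simp
  ring
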